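/- For any ε ∈ (0, π) and all t > s, the spectral measure of f − f* satisfies σ_{f−f*}((−2ε/(t−s), 2ε/(t−s)]) ≤ (ε²/sin²ε) ‖P_{t,s}f − f*‖². -/

import Mathlib

open MeasureTheory Real Set intervalIntegral

/-- The Fejér-type kernel `F_τ(x) = (sin(τx/2)/(τx/2))²`. -/
noncomputable def Fker (τ x : ℝ) : ℝ := (Real.sin (τ * x / 2) / (τ * x / 2)) ^ 2

lemma sin_concave_bound {ε v : ℝ} (hv : 0 < v) (hvε : v ≤ ε) (hεπ : ε ≤ Real.pi) :
    v * Real.sin ε ≤ ε * Real.sin v := by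
  have hε : 0 < ε := hv.trans_le hvε
  have h := strictConcaveOn_sin_Icc.concaveOn.2 (Set.mem_Icc.mpr ⟨le_rfl, Real.pi_pos.le⟩)
    (Set.mem_Icc.mpr ⟨hε.le, hεπ⟩)
    (show (0:ℝ) ≤ 1 - v / ε by rw [sub_nonneg]; exact div_le_one_of_le₀ hvε hε.le)
    (show (0:ℝ) ≤ v / ε from div_nonneg hv.le hε.le)
    (show (1 - v / ε) + v / ε = 1 by ring)
  simp only [smul_eq_mul, mul_zero, Real.sin_zero, zero_add] at h
  rw [div_mul_cancel₀ _ hε.ne'] at h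
  calc v * Real.sin ε = ε * (v / ε * Real.sin ε) := by field_simp
    _ ≤ ε * Real.sin v := mul_le_mul_of_nonneg_left h hε.le

lemma Fker_lower {ε τ x : ℝ} (hε : 0 < ε) (hεπ : ε < Real.pi) (hτ : 0 < τ)
    (hx : x ∈ Set.Ioc (-(2 * ε / τ)) (2 * ε / τ)) (hx0 : x ≠ 0) :
    Real.sin ε ^ 2 / ε ^ 2 ≤ Fker τ x := by
  set u := τ * x / 2 with hu
  have hune : u ≠ 0 := by
    simp only [hu, div_ne_zero_iff]
    exact ⟨mul_ne_zero hτ.ne' hx0, two_ne_zero⟩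
  have habs : |u| ≤ ε := by
    rw [abs_le]
    constructor
    · have h1 : -x < 2 * ε / τ := neg_lt.mp hx.1
      have h2 : τ * (-x) < 2 * ε :=
        calc τ * (-x) < τ * (2 * ε / τ) := mul_lt_mul_of_pos_left h1 hτ
          _ = 2 * ε := by field_simp
      simp only [hu]; nlinarith
    · have h1 := hx.2
      have h2 : τ * x ≤ 2 * ε :=
        calc τ * x ≤ τ * (2 * ε / τ) := mul_le_mul_of_nonneg_left h1 hτ.le
          _ = 2 * ε := by field_simp
      simp only [hu]; linarith
  have habspos : 0 < |u| := abs_pos.mpr hune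
  have key : |u| * Real.sin ε ≤ ε * Real.sin |u| :=
    sin_concave_bound habspos habs hεπ.le
  have hsinε : 0 < Real.sin ε := Real.sin_pos_of_pos_of_lt_pi hε hεπ
  have hsinv : 0 < Real.sin |u| :=
    Real.sin_pos_of_pos_of_lt_pi habspos (habs.trans_lt hεπ)
  have hdiv : Real.sin ε / ε ≤ Real.sin |u| / |u| := by
    rw [div_le_div_iff₀ hε habspos]
    linarith [key]
  have hsq : (Real.sin ε / ε) ^ 2 ≤ (Real.sin |u| / |u|) ^ 2 :=
    pow_le_pow_left₀ (by positivity) hdiv 2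
  unfold Fker
  rw [← hu]
  calc Real.sin ε ^ 2 / ε ^ 2 = (Real.sin ε / ε) ^ 2 := (div_pow _ _ _).symm
    _ ≤ (Real.sin |u| / |u|) ^ 2 := hsq
    _ = (Real.sin u / u) ^ 2 := by
        rcases abs_cases u with ⟨h, _⟩ | ⟨h, _⟩
        · rw [h]
        · rw [h, Real.sin_neg]; ring

theorem stmt1
    {H : Type*} [NormedAddCommGroup H] [InnerProductSpace ℂ H] [CompleteSpace H]
    (U : ℝ → H →L[ℂ] H)
    (hUgrp : ∀ a b : ℝ, U (a + b) = (U a).comp (U b))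
    (hUiso : ∀ (τ : ℝ) (g : H), ‖U τ g‖ = ‖g‖)
    (f fstar : H)
    (hcont : Continuous fun τ : ℝ => U τ f)
    (hfix : ∀ τ : ℝ, U τ fstar = fstar)
    (horth : ∀ g : H, (∀ τ : ℝ, U τ g = g) → (inner ℂ (f - fstar) g : ℂ) = 0)
    (μ : Measure ℝ) [IsFiniteMeasure μ] (hμ0 : μ {0} = 0)
    (hrep : ∀ s t : ℝ, s < t →
      ‖(t - s)⁻¹ • (∫ τ in s..t, U τ f) - fstar‖ ^ 2 = ∫ x, Fker (t - s) x ∂μ)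
    (ε : ℝ) (hε : ε ∈ Set.Ioo 0 Real.pi) (s t : ℝ) (hts : s < t) :
    (μ (Set.Ioc (-(2 * ε / (t - s))) (2 * ε / (t - s)))).toReal ≤
      ε ^ 2 / Real.sin ε ^ 2 * ‖(t - s)⁻¹ • (∫ τ in s..t, U τ f) - fstar‖ ^ 2 := by
  obtain ⟨hε0, hεπ⟩ := hε
  set τ := t - s with hτdef
  have hτ : 0 < τ := sub_pos.mpr hts
  set S : Set ℝ := Set.Ioc (-(2 * ε / τ)) (2 * ε / τ) with hS
  set S' : Set ℝ := S \ {0} with hS'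
  have hSmeas : MeasurableSet S := measurableSet_Ioc
  have hS'meas : MeasurableSet S' := hSmeas.diff (measurableSet_singleton 0)
  have hμS : μ S = μ S' := (measure_diff_null hμ0).symm
  have hsinε : 0 < Real.sin ε := Real.sin_pos_of_pos_of_lt_pi hε0 hεπ
  set g : ℝ → ℝ := fun x => Fker τ x with hg
  have hgmeas : Measurable g := by
    simp only [hg, Fker]
    exact ((Real.measurable_sin.comp (by fun_prop)).div (by fun_prop)).pow_const 2
  have hgnn : ∀ x, 0 ≤ g x := fun x => sq_nonneg _
  have hgbd : ∀ x, g x ≤ 1 := by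
    intro x
    show Fker τ x ≤ 1
    unfold Fker
    rcases eq_or_ne (τ * x / 2) 0 with h | h
    · rw [h]; norm_num
    · have h1 : |Real.sin (τ * x / 2) / (τ * x / 2)| ≤ 1 := by
        rw [abs_div]
        exact div_le_one_of_le₀ (Real.abs_sin_le_abs) (abs_nonneg _)
      calc (Real.sin (τ * x / 2) / (τ * x / 2)) ^ 2
          = |Real.sin (τ * x / 2) / (τ * x / 2)| ^ 2 := (sq_abs _).symm
        _ ≤ 1 ^ 2 := pow_le_pow_left₀ (abs_nonneg _) h1 2
        _ = 1 := one_pow 2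
  have hgint : Integrable g μ := by
    apply Integrable.mono' (integrable_const 1) hgmeas.aestronglyMeasurable
    filter_upwards with x
    rw [Real.norm_eq_abs, abs_of_nonneg (hgnn x)]
    exact hgbd x
  have hlow : ∀ x ∈ S', Real.sin ε ^ 2 / ε ^ 2 ≤ g x := by
    intro x hx
    exact Fker_lower hε0 hεπ hτ hx.1 hx.2
  have hμS'lt : μ S' < ⊤ := measure_lt_top μ S'
  have step1 : Real.sin ε ^ 2 / ε ^ 2 * (μ S').toReal ≤ ∫ x in S', g x ∂μ := by
    have h := setIntegral_mono_on
      (f := fun _ => Real.sin ε ^ 2 / ε ^ 2) (g := g) (μ := μ) (s := S')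
      (integrableOn_const hμS'lt.ne enorm_ne_top) (hgint.integrableOn) hS'meas hlow
    rwa [setIntegral_const, smul_eq_mul, mul_comm, measureReal_def] at h
  have step2 : ∫ x in S', g x ∂μ ≤ ∫ x, g x ∂μ :=
    setIntegral_le_integral hgint (Filter.Eventually.of_forall hgnn)
  have hrepₜ := hrep s t hts
  rw [← hτdef] at hrepₜ
  rw [hrepₜ, hμS]
  have h3 : Real.sin ε ^ 2 / ε ^ 2 * (μ S').toReal ≤ ∫ x, g x ∂μ := step1.trans step2
  calc (μ S').toReal
      = (ε ^ 2 / Real.sin ε ^ 2) * (Real.sin ε ^ 2 / ε ^ 2 * (μ S').toReal) := by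
        field_simp
    _ ≤ (ε ^ 2 / Real.sin ε ^ 2) * ∫ x, Fker τ x ∂μ :=
        mul_le_mul_of_nonneg_left h3 (by positivity)
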